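/- Let φ : A → A be a multiplicative k-linear map on a commutative algebra A that is idempotent under composition (φ∘φ = φ) and restricts to a bijection on the unital ideal A·φ(1_A). Then φ(a) = a·φ(1_A) for all a ∈ A. -/
import Mathlib


/-- The unital ideal `A·e` generated by an element `e` of a commutative ring. -/
def idealOf {A : Type*} [CommRing A] (e : A) : Set A := Set.range (fun a => a * e)

/-- **Partial automorphisms act as multiplication by their value at `1`.**
If `φ : A → A` is a `k`-linear multiplicative map on a commutative algebra `A`,
idempotent under composition (`φ∘φ = φ`), restricting to a bijection of the unital
ideal `A·φ(1)`, then `φ(a) = a·φ(1)` for all `a ∈ A`. -/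
theorem partial_automorphism_eq_mul {k A : Type*} [CommRing k] [CommRing A] [Algebra k A]
    (φ : A →ₗ[k] A)
    (hmul : ∀ x y : A, φ (x * y) = φ x * φ y)
    (hidem : ∀ a : A, φ (φ a) = φ a)
    (hbij : Set.BijOn φ (idealOf (φ 1)) (idealOf (φ 1))) :
    ∀ a : A, φ a = a * φ 1 := by
  intro a
  have he : φ (φ 1) = φ 1 := hidem 1
  -- φ a * φ 1 = φ a
  have habs : φ a * φ 1 = φ a := by
    rw [← hmul, mul_one]
  have h1 : a * φ 1 ∈ idealOf (φ 1) := ⟨a, rfl⟩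
  have h2 : φ a ∈ idealOf (φ 1) := ⟨φ a, habs⟩
  have heq : φ (a * φ 1) = φ (φ a) := by
    rw [hmul, he, habs, hidem]
  exact (hbij.injOn h2 h1 (by rw [heq, hidem]))
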